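/- Exact game value characterization: in the Attacker-Defender game with initial state S_0, the defender has a winning strategy if and only if φ(S_0) < 1, and the attacker has a winning strategy if and only if φ(S_0) ≥ 1. -/

import Mathlib

open Finset

/-- Potential of a state `S` (counts of pieces per level) in a game with `K` levels. -/
noncomputable def phi (K : ℕ) (S : ℕ → ℕ) : ℝ :=
  ∑ i ∈ Finset.range (K+1), (S i : ℝ) * (2:ℝ) ^ (-((K:ℤ) - i))

/-- Advance every piece one level. -/
def advance (S : ℕ → ℕ) : ℕ → ℕ := fun i => if i = 0 then 0 else S (i-1)

/-- The attacker can force a win from state `S`: either a piece is already at level `K`,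
or the attacker can present a partition `A, B` such that whichever part the defender
destroys, the attacker wins from the advanced surviving part. -/
inductive AttackerWins (K : ℕ) : (ℕ → ℕ) → Prop where
  | reach (S : ℕ → ℕ) : S K ≠ 0 → AttackerWins K S
  | step (S A B : ℕ → ℕ) : (∀ i, A i + B i = S i) →
      AttackerWins K (advance A) → AttackerWins K (advance B) → AttackerWins K S

/-- The defender can force a win from state `S`: either no pieces remain, or no piece is at
level `K` and for every partition `A, B` the attacker presents, the defender can destroy one
part so that the defender wins from the advanced other part. -/
inductive DefenderWins (K : ℕ) : (ℕ → ℕ) → Prop where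
  | empty (S : ℕ → ℕ) : (∀ i, S i = 0) → DefenderWins K S
  | step (S : ℕ → ℕ) (choice : (ℕ → ℕ) → (ℕ → ℕ) → Bool) : S K = 0 →
      (∀ A B : ℕ → ℕ, (∀ i, A i + B i = S i) →
        DefenderWins K (advance (if choice A B then A else B))) → DefenderWins K S

namespace Stmt10Aux

lemma phi_nonneg (K : ℕ) (S : ℕ → ℕ) : 0 ≤ phi K S :=
  Finset.sum_nonneg fun i _ => by positivity

lemma phi_add {K : ℕ} {A B S : ℕ → ℕ} (h : ∀ i, A i + B i = S i) :
    phi K A + phi K B = phi K S := by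
  unfold phi
  rw [← Finset.sum_add_distrib]
  refine Finset.sum_congr rfl fun i _ => ?_
  rw [← add_mul, ← Nat.cast_add, h i]

lemma phi_advance {K : ℕ} {X : ℕ → ℕ} (hK : X K = 0) :
    phi K (advance X) = 2 * phi K X := by
  unfold phi
  have hsucc := Finset.sum_range_succ' (M := ℝ)
    (fun i => ((advance X i : ℝ)) * (2:ℝ) ^ (-((K:ℤ) - i))) K
  rw [hsucc]
  have h0 : ((advance X 0 : ℝ)) * (2:ℝ) ^ (-((K:ℤ) - (0:ℕ))) = 0 := by
    simp [advance]
  rw [h0, add_zero, Finset.mul_sum]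
  rw [Finset.sum_range_succ]
  rw [hK]
  simp only [Nat.cast_zero, zero_mul, mul_zero, add_zero]
  apply Finset.sum_congr rfl
  intro i hi
  have hadv : advance X (i + 1) = X i := by simp [advance]
  rw [hadv]
  have hexp : -((K:ℤ) - ((i:ℕ)+1:ℕ)) = (-((K:ℤ) - i)) + 1 := by push_cast; ring
  rw [hexp, zpow_add_one₀ (two_ne_zero)]
  ring

lemma phi_ge_one {K : ℕ} {S : ℕ → ℕ} (h : S K ≠ 0) : 1 ≤ phi K S := by
  have h1 : (1:ℝ) ≤ (S K : ℝ) * (2:ℝ) ^ (-((K:ℤ) - K)) := by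
    simp only [sub_self, neg_zero, zpow_zero, mul_one]
    exact_mod_cast Nat.one_le_iff_ne_zero.2 h
  refine h1.trans ?_
  exact Finset.single_le_sum (f := fun i => (S i : ℝ) * (2:ℝ) ^ (-((K:ℤ) - i)))
    (fun i _ => by positivity) (Finset.self_mem_range_succ K)

lemma SK_eq_zero {K : ℕ} {S : ℕ → ℕ} (h : phi K S < 1) : S K = 0 := by
  by_contra hne
  exact absurd (phi_ge_one hne) (not_le.mpr h)

lemma phi_pos_nonempty {K : ℕ} {X : ℕ → ℕ} (h : 0 < phi K X) :
    ∃ j, j ∈ Finset.range (K+1) ∧ X j ≠ 0 := by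
  by_contra hc
  push_neg at hc
  have : phi K X = 0 := by
    unfold phi
    refine Finset.sum_eq_zero fun i hi => ?_
    rw [hc i hi]
    simp
  rw [this] at h
  exact lt_irrefl _ h

/-- Termination measure. -/
def msr (K : ℕ) (S : ℕ → ℕ) : ℕ := ∑ i ∈ Finset.range (K+1), S i * (K - i)

lemma msr_mono {K : ℕ} {X S : ℕ → ℕ} (h : ∀ i, X i ≤ S i) : msr K X ≤ msr K S :=
  Finset.sum_le_sum fun i _ => Nat.mul_le_mul_right _ (h i)

lemma msr_advance_lt {K : ℕ} {X : ℕ → ℕ} (hK : X K = 0) {j : ℕ} (hjK : j < K)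
    (hj : X j ≠ 0) : msr K (advance X) < msr K X := by
  unfold msr
  rw [Finset.sum_range_succ' (fun i => advance X i * (K - i)) K]
  have h0 : advance X 0 * (K - 0) = 0 := by simp [advance]
  rw [h0, add_zero]
  conv_rhs => rw [Finset.sum_range_succ]
  rw [hK, zero_mul, add_zero]
  have hterm : ∀ i, advance X (i+1) * (K - (i+1)) = X i * (K - 1 - i) := by
    intro i
    simp [advance]
    omega
  simp only [hterm]
  refine Finset.sum_lt_sum (fun i _ => Nat.mul_le_mul_left _ (by omega)) ?_
  exact ⟨j, Finset.mem_range.2 hjK,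
    mul_lt_mul_of_pos_left (by omega : K - 1 - j < K - j) (Nat.pos_of_ne_zero hj)⟩

lemma advance_supp {K : ℕ} {X S : ℕ → ℕ} (hle : ∀ i, X i ≤ S i) (hsupp : ∀ i, K < i → S i = 0)
    (hSK : S K = 0) : ∀ i, K < i → advance X i = 0 := by
  intro i hi
  have hi0 : i ≠ 0 := by omega
  simp only [advance, if_neg hi0]
  have hS : S (i - 1) = 0 := by
    rcases Nat.lt_or_ge K (i-1) with h | h
    · exact hsupp _ h
    · have : i - 1 = K := by omega
      rw [this]; exact hSK
  have := hle (i-1)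
  omega

lemma defender_of_lt (K : ℕ) :
    ∀ n S, msr K S = n → (∀ i, K < i → S i = 0) → phi K S < 1 → DefenderWins K S := by
  intro n
  induction n using Nat.strong_induction_on with
  | _ n IH =>
    intro S hm hsupp hphi
    classical
    have hSK : S K = 0 := SK_eq_zero hphi
    have key : ∀ X : ℕ → ℕ, (∀ i, X i ≤ S i) → 2 * phi K X ≤ phi K S →
        DefenderWins K (advance X) := by
      intro X hle hphiX
      have hXK : X K = 0 := by have := hle K; omega
      by_cases hX : ∀ i, X i = 0
      · refine DefenderWins.empty _ fun i => ?_
        simp only [advance]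
        split
        · rfl
        · exact hX _
      · push_neg at hX
        obtain ⟨j, hj⟩ := hX
        have hjK : j < K := by
          rcases Nat.lt_or_ge j K with h | h
          · exact h
          · exfalso
            rcases Nat.eq_or_lt_of_le h with h' | h'
            · exact hj (h' ▸ hXK)
            · have := hle j; have := hsupp j h'; omega
        have hmlt : msr K (advance X) < n := by
          calc msr K (advance X) < msr K X := msr_advance_lt hXK hjK hj
            _ ≤ msr K S := msr_mono hle
            _ = n := hm
        refine IH _ hmlt _ rfl (advance_supp hle hsupp hSK) ?_
        rw [phi_advance hXK]
        linarith
    refine DefenderWins.step S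
      (fun A B => @decide (phi K A ≤ phi K B) (Classical.propDecidable _)) hSK ?_
    intro A B hAB
    have hadd := phi_add (K := K) hAB
    split
    · next hcond =>
      simp only [decide_eq_true_eq] at hcond
      refine key A (fun i => by have := hAB i; omega) ?_
      linarith
    · next hcond =>
      simp only [decide_eq_true_eq] at hcond
      push_neg at hcond
      refine key B (fun i => by have := hAB i; omega) ?_
      linarith

lemma greedy : ∀ (L : ℕ) (T : ℕ) (S : ℕ → ℕ), 2^L ∣ T →
    T ≤ ∑ i ∈ Finset.range (L+1), S i * 2^i →
    ∃ A : ℕ → ℕ, (∀ i, A i ≤ S i) ∧ (∀ i, L < i → A i = 0) ∧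
      ∑ i ∈ Finset.range (L+1), A i * 2^i = T := by
  intro L
  induction L with
  | zero =>
    intro T S _ hle
    rw [Finset.sum_range_one, pow_zero, mul_one] at hle
    refine ⟨fun i => if i = 0 then T else 0, ?_, ?_, ?_⟩
    · intro i
      dsimp only
      split
      · subst ‹i = 0›; exact hle
      · exact Nat.zero_le _
    · intro i hi
      dsimp only
      rw [if_neg (by omega)]
    · simp
  | succ L IHL =>
    intro T S hdvd hle
    set a := min (S (L+1)) (T / 2^(L+1)) with ha
    have haS : a ≤ S (L+1) := min_le_left _ _
    have haT : a * 2^(L+1) ≤ T := by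
      calc a * 2^(L+1) ≤ (T / 2^(L+1)) * 2^(L+1) :=
            Nat.mul_le_mul_right _ (min_le_right _ _)
        _ = T := Nat.div_mul_cancel hdvd
    set T' := T - a * 2^(L+1) with hT'
    have hdvd' : 2^L ∣ T' := by
      refine Nat.dvd_sub (dvd_trans (pow_dvd_pow 2 (by omega)) hdvd) ?_
      exact Dvd.dvd.mul_left (pow_dvd_pow 2 (by omega)) a
    have hle' : T' ≤ ∑ i ∈ Finset.range (L+1), S i * 2^i := by
      rcases le_total (S (L+1)) (T / 2^(L+1)) with h | h
      · have h0 : a = S (L+1) := by rw [ha]; exact min_eq_left h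
        have h1 : a * 2^(L+1) = S (L+1) * 2^(L+1) := by rw [h0]
        rw [Finset.sum_range_succ] at hle
        omega
      · have ha' : a = T / 2^(L+1) := by rw [ha]; exact min_eq_right h
        have : a * 2^(L+1) = T := by rw [ha']; exact Nat.div_mul_cancel hdvd
        omega
    obtain ⟨A', hA'le, hA'supp, hA'sum⟩ := IHL T' S hdvd' hle'
    refine ⟨fun i => if i = L+1 then a else A' i, ?_, ?_, ?_⟩
    · intro i
      dsimp only
      split
      · subst ‹i = L+1›; exact haS
      · exact hA'le i
    · intro i hi
      dsimp only
      rw [if_neg (by omega)]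
      exact hA'supp i (by omega)
    · dsimp only
      rw [Finset.sum_range_succ, if_pos rfl]
      have heq : ∑ i ∈ Finset.range (L+1), (if i = L+1 then a else A' i) * 2^i
          = ∑ i ∈ Finset.range (L+1), A' i * 2^i := by
        refine Finset.sum_congr rfl fun i hi => ?_
        rw [if_neg (by have := Finset.mem_range.1 hi; omega)]
      rw [heq, hA'sum]
      omega

lemma phi_eq (K : ℕ) (S : ℕ → ℕ) :
    phi K S = (2:ℝ)^(-(K:ℤ)) * ∑ i ∈ Finset.range (K+1), (S i : ℝ) * 2^(i:ℕ) := by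
  rw [Finset.mul_sum]
  refine Finset.sum_congr rfl fun i _ => ?_
  rw [show -((K:ℤ) - i) = -(K:ℤ) + (i:ℤ) by ring, zpow_add₀ (two_ne_zero), zpow_natCast]
  ring

lemma split_exists {K : ℕ} {S : ℕ → ℕ} (hK1 : 1 ≤ K) (hSK : S K = 0)
    (hphi : (1:ℝ)/2 ≤ phi K S) :
    ∃ A : ℕ → ℕ, (∀ i, A i ≤ S i) ∧ phi K A = 1/2 := by
  have hpow : (0:ℝ) < (2:ℝ)^(-(K:ℤ)) := by positivity
  have hsum : (2:ℝ)^((K:ℕ)-1) ≤ ∑ i ∈ Finset.range (K+1), (S i : ℝ) * 2^(i:ℕ) := by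
    have := hphi
    rw [phi_eq] at this
    have h2 : (1:ℝ)/2 = (2:ℝ)^(-(K:ℤ)) * (2:ℝ)^((K:ℕ)-1) := by
      rw [← zpow_natCast (2:ℝ) (K-1), ← zpow_add₀ (two_ne_zero)]
      have : -(K:ℤ) + ((K-1:ℕ):ℤ) = -1 := by omega
      rw [this]
      norm_num
    rw [h2] at this
    exact le_of_mul_le_mul_left this hpow
  have hnat : 2^(K-1) ≤ ∑ i ∈ Finset.range (K+1), S i * 2^i := by
    have : ((2^(K-1) : ℕ) : ℝ) ≤ ((∑ i ∈ Finset.range (K+1), S i * 2^i : ℕ) : ℝ) := by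
      push_cast
      exact hsum
    exact_mod_cast this
  have hnat' : 2^(K-1) ≤ ∑ i ∈ Finset.range K, S i * 2^i := by
    have : ∑ i ∈ Finset.range (K+1), S i * 2^i = ∑ i ∈ Finset.range K, S i * 2^i := by
      rw [Finset.sum_range_succ, hSK]
      simp
    omega
  have hK' : K - 1 + 1 = K := by omega
  obtain ⟨A, hAle, hAsupp, hAsum⟩ := greedy (K-1) (2^(K-1)) S (dvd_refl _)
    (by rw [hK']; exact hnat')
  refine ⟨A, hAle, ?_⟩
  rw [phi_eq]
  have hsumA : ∑ i ∈ Finset.range (K+1), (A i : ℝ) * 2^(i:ℕ)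
      = ((2:ℝ))^((K:ℕ)-1) := by
    have h1 : ∑ i ∈ Finset.range (K+1), A i * 2^i = 2^(K-1) := by
      rw [hK'] at hAsum
      rw [Finset.sum_range_succ, hAsupp K (by omega), zero_mul, add_zero, hAsum]
    calc ∑ i ∈ Finset.range (K+1), (A i : ℝ) * 2^(i:ℕ)
        = ((∑ i ∈ Finset.range (K+1), A i * 2^i : ℕ) : ℝ) := by push_cast; ring_nf
      _ = ((2^(K-1) : ℕ) : ℝ) := by rw [h1]
      _ = (2:ℝ)^((K:ℕ)-1) := by push_cast; ring
  rw [hsumA]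
  rw [← zpow_natCast (2:ℝ) (K-1), ← zpow_add₀ (two_ne_zero)]
  have : -(K:ℤ) + ((K-1:ℕ):ℤ) = -1 := by omega
  rw [this]
  norm_num

lemma attacker_of_ge (K : ℕ) :
    ∀ n S, msr K S = n → (∀ i, K < i → S i = 0) → 1 ≤ phi K S → AttackerWins K S := by
  intro n
  induction n using Nat.strong_induction_on with
  | _ n IH =>
    intro S hm hsupp hphi
    by_cases hSK : S K = 0
    · have hK1 : 1 ≤ K := by
        by_contra h
        have hK0 : K = 0 := by omega
        subst hK0
        have : phi 0 S = (S 0 : ℝ) := by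
          unfold phi
          simp
        rw [this, hSK] at hphi
        norm_num at hphi
      obtain ⟨A, hAle, hAphi⟩ := split_exists hK1 hSK (by linarith)
      set B := fun i => S i - A i with hB
      have hAB : ∀ i, A i + B i = S i := fun i => by
        simp only [hB]; have := hAle i; omega
      have hBphi : (1:ℝ)/2 ≤ phi K B := by
        have := phi_add (K := K) hAB
        rw [hAphi] at this
        linarith
      have key : ∀ X : ℕ → ℕ, (∀ i, X i ≤ S i) → (1:ℝ)/2 ≤ phi K X →
          AttackerWins K (advance X) := by
        intro X hle hphiX
        have hXK : X K = 0 := by have := hle K; omega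
        obtain ⟨j, hjm, hj⟩ := phi_pos_nonempty (K := K) (by linarith)
        have hjK : j < K := by
          rcases Nat.lt_or_ge j K with h | h
          · exact h
          · exfalso
            rcases Nat.eq_or_lt_of_le h with h' | h'
            · exact hj (h' ▸ hXK)
            · have := hle j; have := hsupp j h'; omega
        have hmlt : msr K (advance X) < n := by
          calc msr K (advance X) < msr K X := msr_advance_lt hXK hjK hj
            _ ≤ msr K S := msr_mono hle
            _ = n := hm
        refine IH _ hmlt _ rfl (advance_supp hle hsupp hSK) ?_
        rw [phi_advance hXK]
        linarith
      refine AttackerWins.step S A B hAB ?_ ?_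
      · exact key A hAle (by rw [hAphi])
      · exact key B (fun i => by simp only [hB]; omega) hBphi
    · exact AttackerWins.reach S hSK

lemma not_both {K : ℕ} {S : ℕ → ℕ} (hA : AttackerWins K S) : DefenderWins K S → False := by
  induction hA with
  | reach S h =>
    intro hD
    cases hD with
    | empty _ h0 => exact h (h0 K)
    | step _ _ hK _ => exact h hK
  | step S A B hpart hA hB IHA IHB =>
    intro hD
    cases hD with
    | empty _ h0 =>
      apply IHA
      refine DefenderWins.empty _ fun i => ?_
      simp only [advance]
      split
      · rfl
      · have h1 := hpart (i-1)
        have h2 := h0 (i-1)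
        omega
    | step _ choice hK h =>
      have hw := h A B hpart
      by_cases hc : choice A B = true
      · rw [if_pos hc] at hw
        exact IHA hw
      · rw [if_neg hc] at hw
        exact IHB hw

end Stmt10Aux

/-- Exact game value: the defender wins iff `φ(S) < 1`, and the attacker wins iff `φ(S) ≥ 1`. -/
theorem stmt10 (K : ℕ) (S : ℕ → ℕ) (hsupp : ∀ i, K < i → S i = 0) :
    (DefenderWins K S ↔ phi K S < 1) ∧ (AttackerWins K S ↔ 1 ≤ phi K S) := by
  constructor
  · constructor
    · intro hD
      by_contra h
      push_neg at h
      exact Stmt10Aux.not_both (Stmt10Aux.attacker_of_ge K _ S rfl hsupp h) hD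
    · intro h
      exact Stmt10Aux.defender_of_lt K _ S rfl hsupp h
  · constructor
    · intro hA
      by_contra h
      push_neg at h
      exact Stmt10Aux.not_both hA (Stmt10Aux.defender_of_lt K _ S rfl hsupp h)
    · intro h
      exact Stmt10Aux.attacker_of_ge K _ S rfl hsupp h
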